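/- A finite set B of Wang tiles admits a periodic tiling of the plane if and only if for some m ≥ 1 the torus transition matrix T_m is not nilpotent, i.e., if and only if tr(T_m^n) > 0 for some m, n ≥ 1. -/
import Mathlib


structure WangTile (p : ℕ) where
  t : Fin p
  b : Fin p
  l : Fin p
  r : Fin p
deriving DecidableEq, Fintype

def IsTiling {p : ℕ} (B : Set (WangTile p)) (f : ℤ → ℤ → WangTile p) : Prop :=
  (∀ i j, f i j ∈ B) ∧ (∀ i j, (f i j).r = (f (i + 1) j).l) ∧
    (∀ i j, (f i j).t = (f i (j + 1)).b)

def IsPeriodic {p : ℕ} (f : ℤ → ℤ → WangTile p) : Prop :=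
  ∃ m n : ℕ, 1 ≤ m ∧ 1 ≤ n ∧ ∀ i j : ℤ, f (i + (m : ℤ)) j = f i j ∧ f i (j + (n : ℤ)) = f i j


/-- Cyclic successor on `Fin n`. -/
def finSucc {n : ℕ} (k : Fin n) : Fin n :=
  ⟨((k : ℕ) + 1) % n, Nat.mod_lt _ (Nat.lt_of_le_of_lt (Nat.zero_le _) k.isLt)⟩

/-- Vertically-periodic columns of `m` tiles from `B`. -/
abbrev PerCol (p m : ℕ) (B : Finset (WangTile p)) : Type :=
  {c : Fin m → WangTile p // (∀ k, c k ∈ B) ∧ ∀ k : Fin m, (c k).t = (c (finSucc k)).b}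

/-- The trace operator of order `m`. -/
def traceOp (p m : ℕ) (B : Finset (WangTile p)) :
    Matrix (PerCol p m B) (PerCol p m B) ℝ :=
  Matrix.of fun u v => if ∀ k : Fin m, (u.1 k).r = (v.1 k).l then 1 else 0

section core
variable {p m : ℕ} {B : Finset (WangTile p)}

def WEdge (u v : PerCol p m B) : Prop := ∀ k, (u.1 k).r = (v.1 k).l

instance (u v : PerCol p m B) : Decidable (WEdge u v) := by
  unfold WEdge; infer_instance

lemma traceOp_apply (u v : PerCol p m B) :
    traceOp p m B u v = if WEdge u v then 1 else 0 := by
  by_cases h : WEdge u v <;> simp [traceOp, WEdge, h] at * <;> simp [h]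

lemma traceOp_nonneg (u v : PerCol p m B) : 0 ≤ traceOp p m B u v := by
  rw [traceOp_apply]; split <;> norm_num

lemma traceOp_pow_nonneg (n : ℕ) (u v : PerCol p m B) :
    0 ≤ (traceOp p m B ^ n) u v := by
  induction n generalizing u v with
  | zero => simp [Matrix.one_apply]; split <;> norm_num
  | succ n ih =>
      rw [pow_succ, Matrix.mul_apply]
      exact Finset.sum_nonneg fun w _ => mul_nonneg (ih u w) (traceOp_nonneg w v)

lemma one_le_pow_of_walk (n : ℕ) (g : ℕ → PerCol p m B)
    (he : ∀ i, i < n → WEdge (g i) (g (i + 1))) :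
    1 ≤ (traceOp p m B ^ n) (g 0) (g n) := by
  induction n with
  | zero => simp [Matrix.one_apply]
  | succ n ih =>
      rw [pow_succ, Matrix.mul_apply]
      have h1 : (1:ℝ) ≤ (traceOp p m B ^ n) (g 0) (g n) * traceOp p m B (g n) (g (n+1)) := by
        have := he n (Nat.lt_succ_self n)
        rw [traceOp_apply, if_pos this, mul_one]
        exact ih fun i hi => he i (hi.trans (Nat.lt_succ_self n))
      refine h1.trans ?_
      exact Finset.single_le_sum
        (f := fun w => (traceOp p m B ^ n) (g 0) w * traceOp p m B w (g (n + 1)))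
        (fun w _ => mul_nonneg (traceOp_pow_nonneg n _ _) (traceOp_nonneg _ _))
        (Finset.mem_univ (g n))

lemma walk_of_pos (n : ℕ) (u v : PerCol p m B) (h : 0 < (traceOp p m B ^ n) u v) :
    ∃ g : ℕ → PerCol p m B, g 0 = u ∧ g n = v ∧ ∀ i, i < n → WEdge (g i) (g (i + 1)) := by
  induction n generalizing v with
  | zero =>
      simp [Matrix.one_apply] at h
      rcases eq_or_ne u v with rfl | hne
      · exact ⟨fun _ => u, rfl, rfl, fun i hi => absurd hi (Nat.not_lt_zero i)⟩
      · rw [if_neg hne] at h; exact absurd h (lt_irrefl 0)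
  | succ n ih =>
      rw [pow_succ, Matrix.mul_apply] at h
      obtain ⟨w, -, hw⟩ := Finset.exists_ne_zero_of_sum_ne_zero h.ne'
      have h1 : 0 < (traceOp p m B ^ n) u w := by
        rcases (traceOp_pow_nonneg n u w).lt_or_eq with h1 | h1
        · exact h1
        · exact absurd (by rw [← h1, zero_mul]) hw
      have h2 : WEdge w v := by
        by_contra h2
        exact hw (by rw [traceOp_apply, if_neg h2, mul_zero])
      obtain ⟨g, hg0, hgn, hge⟩ := ih w h1
      refine ⟨fun i => if i ≤ n then g i else v, by simpa using hg0, by simp, ?_⟩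
      intro i hi
      rcases Nat.lt_or_ge i n with hin | hin
      · simpa [hin.le, Nat.succ_le_of_lt hin] using hge i hin
      · have : i = n := by omega
        subst this
        simpa [hgn] using h2

/-- Extend a closed walk periodically. -/
lemma cycle_extend (L : ℕ) (hL : 1 ≤ L) (h : ℕ → PerCol p m B) (hcl : h L = h 0)
    (he : ∀ t, t < L → WEdge (h t) (h (t + 1))) :
    ∃ g : ℕ → PerCol p m B, (∀ i, g (i + L) = g i) ∧ ∀ i, WEdge (g i) (g (i + 1)) := by
  refine ⟨fun t => h (t % L), fun i => by simp [Nat.add_mod_right], fun i => ?_⟩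
  have h1 : i % L < L := Nat.mod_lt _ hL
  have key : h ((i + 1) % L) = h (i % L + 1) := by
    have e : (i % L + 1) % L = (i + 1) % L := Nat.mod_add_mod i L 1
    rcases Nat.lt_or_ge (i % L + 1) L with hlt | hge
    · rw [← e, Nat.mod_eq_of_lt hlt]
    · have h2 : i % L + 1 = L := by omega
      rw [← e, h2, Nat.mod_self]
      exact hcl.symm
  show WEdge (h (i % L)) (h ((i + 1) % L))
  rw [key]
  exact he _ h1

def HasCW (p m : ℕ) (B : Finset (WangTile p)) (n : ℕ) : Prop :=
  ∃ g : ℕ → PerCol p m B, (∀ i, g (i + n) = g i) ∧ ∀ i, WEdge (g i) (g (i + 1))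

lemma trace_pos_of_cw (n t : ℕ) (hn : 1 ≤ n) (ht : 1 ≤ t) (h : HasCW p m B n) :
    0 < Matrix.trace (traceOp p m B ^ (n * t)) := by
  obtain ⟨g, hper, he⟩ := h
  have hmul : ∀ s, g (n * s) = g 0 := by
    intro s
    induction s with
    | zero => simp
    | succ s ih => rw [Nat.mul_succ, hper, ih]
  have h1 : (1:ℝ) ≤ (traceOp p m B ^ (n * t)) (g 0) (g (n * t)) :=
    one_le_pow_of_walk _ g fun i _ => he i
  rw [hmul t] at h1
  have : Matrix.trace (traceOp p m B ^ (n * t)) =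
      ∑ u : PerCol p m B, (traceOp p m B ^ (n * t)) u u := rfl
  rw [this]
  have := Finset.single_le_sum (f := fun u => (traceOp p m B ^ (n * t)) u u)
    (fun u _ => traceOp_pow_nonneg _ u u) (Finset.mem_univ (g 0))
  linarith

lemma cw_of_trace_pos (n : ℕ) (hn : 1 ≤ n) (h : 0 < Matrix.trace (traceOp p m B ^ n)) :
    HasCW p m B n := by
  have : ∃ u : PerCol p m B, 0 < (traceOp p m B ^ n) u u := by
    by_contra hc
    push_neg at hc
    have : Matrix.trace (traceOp p m B ^ n) ≤ 0 :=
      Finset.sum_nonpos fun u _ => hc u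
    linarith
  obtain ⟨u, hu⟩ := this
  obtain ⟨g, hg0, hgn, hge⟩ := walk_of_pos n u u hu
  exact cycle_extend n hn g (by rw [hgn, hg0]) hge

lemma not_nilpotent_of_cw (n : ℕ) (hn : 1 ≤ n) (h : HasCW p m B n) :
    ¬ ∃ k : ℕ, 1 ≤ k ∧ traceOp p m B ^ k = 0 := by
  rintro ⟨k, hk, h0⟩
  have htr := trace_pos_of_cw n k hn hk h
  have : traceOp p m B ^ (n * k) = 0 := by
    have : n * k = k + (n * k - k) := by
      have : k ≤ n * k := Nat.le_mul_of_pos_left k hn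
      omega
    rw [this, pow_add, h0, zero_mul]
  rw [this] at htr
  simp at htr

lemma exists_trace_pos_of_not_nilpotent
    (h : ¬ ∃ k : ℕ, 1 ≤ k ∧ traceOp p m B ^ k = 0) :
    ∃ n : ℕ, 1 ≤ n ∧ 0 < Matrix.trace (traceOp p m B ^ n) := by
  by_contra hc
  push_neg at hc
  apply h
  set N := Fintype.card (PerCol p m B) with hN
  refine ⟨N + 1, Nat.le_add_left 1 N, ?_⟩
  ext u v
  simp only [Matrix.zero_apply]
  by_contra hne
  have hpos : 0 < (traceOp p m B ^ (N + 1)) u v :=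
    (traceOp_pow_nonneg _ u v).lt_of_ne (Ne.symm hne)
  obtain ⟨g, hg0, hgn, hge⟩ := walk_of_pos (N + 1) u v hpos
  obtain ⟨i, j, hij, hgij⟩ := Fintype.exists_ne_map_eq_of_card_lt
    (fun i : Fin (N + 2) => g i) (by simp [hN])
  wlog hlt : (i : ℕ) < (j : ℕ) generalizing i j
  · have hne' : (i : ℕ) ≠ (j : ℕ) := fun h => hij (Fin.ext h)
    exact this j i hij.symm hgij.symm (by omega)
  set L := (j : ℕ) - (i : ℕ) with hL
  have hL1 : 1 ≤ L := by omega
  have hcycle : HasCW p m B L := by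
    refine cycle_extend L hL1 (fun t => g ((i : ℕ) + t)) ?_ ?_
    · show g ((i : ℕ) + L) = g ((i : ℕ) + 0)
      have h3 : (i : ℕ) + L = (j : ℕ) := by omega
      rw [h3]
      simpa using hgij.symm
    · intro t htL
      have : (i : ℕ) + t < N + 1 := by
        have := j.isLt
        omega
      have := hge ((i : ℕ) + t) this
      simpa [Nat.add_assoc] using this
  have htr := trace_pos_of_cw L 1 hL1 le_rfl hcycle
  rw [Nat.mul_one] at htr
  exact absurd htr (not_lt.mpr (hc L hL1))

end core

section tiling
variable {p : ℕ} {B : Finset (WangTile p)}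

lemma emod_toNat_succ {N : ℕ} (hN : 0 < N) (i : ℤ) :
    ((i + 1) % (N : ℤ)).toNat = ((i % (N : ℤ)).toNat + 1) % N := by
  have hN' : (0:ℤ) < N := by exact_mod_cast hN
  have h0 : (0:ℤ) ≤ i % N := Int.emod_nonneg i hN'.ne'
  have h1 : (i + 1) % (N:ℤ) = (i % N + 1) % N := by
    have h2 : i + 1 = (i % N + 1) + (N:ℤ) * (i / N) := by
      have := Int.mul_ediv_add_emod i N
      linarith
    rw [h2, Int.add_mul_emod_self_left]
  obtain ⟨a, ha⟩ : ∃ a : ℕ, i % (N:ℤ) = (a : ℤ) := ⟨(i % N).toNat, (Int.toNat_of_nonneg h0).symm⟩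
  rw [h1, ha, show ((a:ℤ)+1) = ((a+1:ℕ):ℤ) by push_cast; ring, ← Int.natCast_mod,
    Int.toNat_natCast, Int.toNat_natCast]

lemma cw_of_tiling (f : ℤ → ℤ → WangTile p) (ht : IsTiling (↑B) f) (hp : IsPeriodic f) :
    ∃ m n : ℕ, 1 ≤ m ∧ 1 ≤ n ∧ HasCW p m B n := by
  obtain ⟨M, N, hM, hN, hper⟩ := hp
  obtain ⟨hmem, hhor, hver⟩ := ht
  refine ⟨N, M, hN, hM, fun i : ℕ =>
    ⟨fun k : Fin N => f (i : ℤ) (k : ℤ), fun k => hmem _ _, fun k => ?_⟩, fun i => ?_, fun i => ?_⟩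
  · -- vertical matching within a column
    show (f (i : ℤ) (k : ℤ)).t = (f (i : ℤ) (((finSucc k : Fin N) : ℕ) : ℤ)).b
    by_cases hk : (k : ℕ) + 1 < N
    · have e : ((((finSucc k : Fin N) : ℕ)) : ℤ) = (k : ℤ) + 1 := by
        simp only [finSucc, Nat.mod_eq_of_lt hk]
        push_cast
        ring
      rw [e]
      exact hver _ _
    · have hk' : (k : ℕ) + 1 = N := by have := k.isLt; omega
      have e : ((((finSucc k : Fin N) : ℕ)) : ℤ) = 0 := by
        simp [finSucc, hk']
      rw [e]
      have h2 : f (i : ℤ) ((k : ℤ) + 1) = f (i : ℤ) 0 := by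
        rw [show ((k : ℤ) + 1) = (0 : ℤ) + (N : ℤ) by push_cast; omega]
        exact (hper _ 0).2
      rw [← h2]
      exact hver _ _
  · -- periodicity of the column sequence
    apply Subtype.ext
    funext k
    show f (((i + M : ℕ) : ℤ)) (k : ℤ) = f (i : ℤ) (k : ℤ)
    have := (hper (i : ℤ) (k : ℤ)).1
    push_cast
    push_cast at this
    exact this
  · -- edges
    intro k
    show (f (i : ℤ) (k : ℤ)).r = (f (((i + 1 : ℕ) : ℤ)) (k : ℤ)).l
    have := hhor (i : ℤ) (k : ℤ)
    push_cast
    exact this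

lemma tiling_of_cw (m n : ℕ) (hm : 1 ≤ m) (hn : 1 ≤ n) (h : HasCW p m B n) :
    ∃ f : ℤ → ℤ → WangTile p, IsTiling (↑B) f ∧ IsPeriodic f := by
  obtain ⟨g, hper, he⟩ := h
  have hm' : (0:ℤ) < m := by exact_mod_cast hm
  have hn' : (0:ℤ) < n := by exact_mod_cast hn
  have jlt : ∀ j : ℤ, (j % (m:ℤ)).toNat < m := fun j =>
    (Int.toNat_lt (Int.emod_nonneg j hm'.ne')).mpr (Int.emod_lt_of_pos j hm')
  have gmod : ∀ x : ℕ, g (x % n) = g x := fun x => Function.Periodic.map_mod_nat hper x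
  refine ⟨fun i j => (g ((i % (n:ℤ)).toNat)).1 ⟨(j % (m:ℤ)).toNat, jlt j⟩,
    ⟨fun i j => (g _).2.1 _, fun i j => ?_, fun i j => ?_⟩,
    n, m, hn, hm, fun i j => ⟨?_, ?_⟩⟩
  · -- horizontal matching
    have e2 : g (((i+1) % (n:ℤ)).toNat) = g ((i % (n:ℤ)).toNat + 1) := by
      rw [emod_toNat_succ (by omega) i, gmod]
    show ((g ((i % (n:ℤ)).toNat)).1 _).r = ((g (((i+1) % (n:ℤ)).toNat)).1 _).l
    rw [e2]
    exact he ((i % (n:ℤ)).toNat) ⟨(j % (m:ℤ)).toNat, jlt j⟩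
  · -- vertical matching
    have hk := (g ((i % (n:ℤ)).toNat)).2.2 ⟨(j % (m:ℤ)).toNat, jlt j⟩
    have e3 : (⟨((j+1) % (m:ℤ)).toNat, jlt (j+1)⟩ : Fin m) =
        finSucc ⟨(j % (m:ℤ)).toNat, jlt j⟩ := Fin.ext (emod_toNat_succ (by omega) j)
    show ((g ((i % (n:ℤ)).toNat)).1 _).t = ((g ((i % (n:ℤ)).toNat)).1 ⟨((j+1) % (m:ℤ)).toNat, jlt (j+1)⟩).b
    rw [e3]
    exact hk
  · -- horizontal period n
    have e : (i + (n:ℤ)) % n = i % n := by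
      rw [show i + (n:ℤ) = i + n * 1 by ring, Int.add_mul_emod_self_left]
    show (g (((i + (n:ℤ)) % n).toNat)).1 _ = (g ((i % (n:ℤ)).toNat)).1 _
    rw [e]
  · -- vertical period m
    have e : (j + (m:ℤ)) % m = j % m := by
      rw [show j + (m:ℤ) = j + m * 1 by ring, Int.add_mul_emod_self_left]
    have e' : (⟨((j + (m:ℤ)) % m).toNat, jlt (j + (m:ℤ))⟩ : Fin m) =
        ⟨(j % (m:ℤ)).toNat, jlt j⟩ := by
      apply Fin.ext
      show ((j + (m:ℤ)) % m).toNat = (j % (m:ℤ)).toNat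
      rw [e]
    show (g ((i % (n:ℤ)).toNat)).1 ⟨((j + (m:ℤ)) % m).toNat, jlt (j + (m:ℤ))⟩ =
      (g ((i % (n:ℤ)).toNat)).1 ⟨(j % (m:ℤ)).toNat, jlt j⟩
    rw [e']

end tiling



theorem periodic_tiling_iff_traceOp_not_nilpotent {p : ℕ} (B : Finset (WangTile p)) :
    ((∃ f : ℤ → ℤ → WangTile p, IsTiling (↑B) f ∧ IsPeriodic f) ↔
      ∃ m : ℕ, 1 ≤ m ∧ ¬ ∃ k : ℕ, 1 ≤ k ∧ traceOp p m B ^ k = 0) ∧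
    ((∃ f : ℤ → ℤ → WangTile p, IsTiling (↑B) f ∧ IsPeriodic f) ↔
      ∃ m n : ℕ, 1 ≤ m ∧ 1 ≤ n ∧ 0 < Matrix.trace (traceOp p m B ^ n)) := by
  have hPC : (∃ f : ℤ → ℤ → WangTile p, IsTiling (↑B) f ∧ IsPeriodic f) ↔
      ∃ m n : ℕ, 1 ≤ m ∧ 1 ≤ n ∧ HasCW p m B n := by
    constructor
    · rintro ⟨f, ht, hp⟩
      exact cw_of_tiling f ht hp
    · rintro ⟨m, n, hm, hn, h⟩
      exact tiling_of_cw m n hm hn h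
  constructor
  · rw [hPC]
    constructor
    · rintro ⟨m, n, hm, hn, h⟩
      exact ⟨m, hm, not_nilpotent_of_cw n hn h⟩
    · rintro ⟨m, hm, h⟩
      obtain ⟨n, hn, htr⟩ := exists_trace_pos_of_not_nilpotent h
      exact ⟨m, n, hm, hn, cw_of_trace_pos n hn htr⟩
  · rw [hPC]
    constructor
    · rintro ⟨m, n, hm, hn, h⟩
      exact ⟨m, n, hm, hn, by simpa using trace_pos_of_cw n 1 hn le_rfl h⟩
    · rintro ⟨m, n, hm, hn, htr⟩
      exact ⟨m, n, hm, hn, cw_of_trace_pos n hn htr⟩
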